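/- Assume ‖φ‖_{∞,1} < ∞, f̃ is locally approximately linear on the closed s-neighborhood with constants K₁, K₂ > 0, and ‖f̃(0, ŷ(k), k)‖_∞ ≤ s for all k. If two consecutive Picard iterates satisfy ‖η_{(m)}‖_{∞,1} ≤ s and ‖η_{(m+1)}‖_{∞,1} ≤ s (and the relevant Picard-update series converge absolutely), then the successive differences contract: ‖η_{(m+2)} − η_{(m+1)}‖_{∞,1} ≤ ‖φ‖_{∞,1}·K₁·‖η_{(m+1)} − η_{(m)}‖_{∞,1}. -/
import Mathlib


open Matrix

noncomputable section

/-- The matrix sequence `φ : ℤ → ℝ^{n×n}` of the stable inversion theory. -/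
def stabPhi {ns nu : ℕ} (As : Matrix (Fin ns) (Fin ns) ℝ)
    (Au : Matrix (Fin nu) (Fin nu) ℝ) :
    ℤ → Matrix (Fin ns ⊕ Fin nu) (Fin ns ⊕ Fin nu) ℝ := fun k =>
  if 0 < k then Matrix.fromBlocks (As ^ k.toNat) 0 0 0
  else if k = 0 then Matrix.fromBlocks 1 0 0 0
  else Matrix.fromBlocks 0 0 0 (-(Au⁻¹ ^ (-k).toNat))

/-- The operator norm induced by the vector `∞`-norm: the maximum absolute row sum. -/
def rowSumNorm {m n : Type*} [Fintype m] [Fintype n] (M : Matrix m n ℝ) : ℝ :=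
  ⨆ i, ∑ j, |M i j|

/-- `rowSumNorm` is nonnegative. -/
lemma rowSumNorm_nonneg {m n : Type*} [Fintype m] [Fintype n] (M : Matrix m n ℝ) :
    0 ≤ rowSumNorm M :=
  Real.iSup_nonneg fun _ => Finset.sum_nonneg fun _ _ => abs_nonneg _

/-- The induced operator norm bound for `mulVec` with the sup norm. -/
lemma mulVec_norm_le {m n : Type*} [Fintype m] [Fintype n] (M : Matrix m n ℝ) (v : n → ℝ) :
    ‖M.mulVec v‖ ≤ rowSumNorm M * ‖v‖ := by
  have h0 : 0 ≤ rowSumNorm M * ‖v‖ := mul_nonneg (rowSumNorm_nonneg M) (norm_nonneg _)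
  rw [pi_norm_le_iff_of_nonneg h0]
  intro i
  have h1 : ‖M.mulVec v i‖ ≤ (∑ j, |M i j|) * ‖v‖ := by
    show ‖∑ j, M i j * v j‖ ≤ _
    calc ‖∑ j, M i j * v j‖ ≤ ∑ j, ‖M i j * v j‖ := norm_sum_le _ _
    _ ≤ ∑ j, |M i j| * ‖v‖ := Finset.sum_le_sum fun j _ => by
        rw [norm_mul, Real.norm_eq_abs]
        exact mul_le_mul_of_nonneg_left (norm_le_pi_norm v j) (abs_nonneg _)
    _ = (∑ j, |M i j|) * ‖v‖ := (Finset.sum_mul _ _ _).symm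
  refine h1.trans (mul_le_mul_of_nonneg_right ?_ (norm_nonneg _))
  exact le_ciSup (f := fun i => ∑ j, |M i j|) (Set.Finite.bddAbove (Set.finite_range _)) i

/-- Shift equivalence on `ℤ`. -/
def zShift : ℤ ≃ ℤ where
  toFun j := j - 1
  invFun j := j + 1
  left_inv j := by simp
  right_inv j := by simp

/-- Shear equivalence on `ℤ × ℤ`. -/
def shearEquiv : ℤ × ℤ ≃ ℤ × ℤ where
  toFun p := (p.1 + p.2, p.2)
  invFun p := (p.1 - p.2, p.2)
  left_inv p := by simp
  right_inv p := by simp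

set_option maxHeartbeats 1000000 in
/-- Contraction of successive Picard differences:
`‖η_(m+2) − η_(m+1)‖_{∞,1} ≤ ‖φ‖_{∞,1} K₁ ‖η_(m+1) − η_(m)‖_{∞,1}`. -/
theorem picard_differences_contract
    (ns nu μ : ℕ) (hμ : 1 ≤ μ)
    (As : Matrix (Fin ns) (Fin ns) ℝ) (Au : Matrix (Fin nu) (Fin nu) ℝ)
    (hAu : IsUnit Au.det)
    (Atil : Matrix (Fin ns ⊕ Fin nu) (Fin ns ⊕ Fin nu) ℝ)
    (hAtil : Atil = Matrix.fromBlocks As 0 0 Au)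
    (ftil : (Fin ns ⊕ Fin nu → ℝ) → (Fin (μ+1) → ℝ) → ℤ → (Fin ns ⊕ Fin nu → ℝ))
    (yhat : ℤ → (Fin (μ+1) → ℝ))
    (s K₁ K₂ : ℝ) (hs : 0 < s) (hK₁ : 0 < K₁) (hK₂ : 0 < K₂)
    -- ‖φ‖_{∞,1} < ∞
    (hφsum : Summable fun k : ℤ => rowSumNorm (stabPhi As Au k))
    -- local approximate linearity on the closed s-neighborhood
    (hLAL : ∀ (k : ℤ) (a b : Fin ns ⊕ Fin nu → ℝ) (ya yb : Fin (μ+1) → ℝ),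
      ‖a‖ ≤ s → ‖b‖ ≤ s → ‖ftil 0 ya k‖ ≤ s → ‖ftil 0 yb k‖ ≤ s →
      ‖(ftil a ya k - Atil.mulVec a) - (ftil b yb k - Atil.mulVec b)‖
        ≤ K₁ * ‖a - b‖ + K₂ * ‖ftil 0 ya k - ftil 0 yb k‖)
    -- ‖f̃(0, ŷ(k), k)‖_∞ ≤ s for all k
    (hfbnd : ∀ k : ℤ, ‖ftil 0 (yhat k) k‖ ≤ s)
    -- two consecutive iterates lie in the s-ball
    (ηm ηm1 ηm2 : ℤ → (Fin ns ⊕ Fin nu → ℝ))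
    (hηmsum : Summable fun k : ℤ => ‖ηm k‖)
    (hηm : (∑' k : ℤ, ‖ηm k‖) ≤ s)
    (hηm1sum : Summable fun k : ℤ => ‖ηm1 k‖)
    (hηm1bnd : (∑' k : ℤ, ‖ηm1 k‖) ≤ s)
    -- the relevant Picard-update series converge absolutely
    (habs1 : ∀ k : ℤ, Summable fun j : ℤ => ‖(stabPhi As Au (k - j)).mulVec
        (ftil (ηm (j-1)) (yhat (j-1)) (j-1) - Atil.mulVec (ηm (j-1)))‖)
    (habs2 : ∀ k : ℤ, Summable fun j : ℤ => ‖(stabPhi As Au (k - j)).mulVec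
        (ftil (ηm1 (j-1)) (yhat (j-1)) (j-1) - Atil.mulVec (ηm1 (j-1)))‖)
    -- the Picard updates
    (hηm1 : ∀ k : ℤ, ηm1 k = ∑' j : ℤ, (stabPhi As Au (k - j)).mulVec
        (ftil (ηm (j-1)) (yhat (j-1)) (j-1) - Atil.mulVec (ηm (j-1))))
    (hηm2 : ∀ k : ℤ, ηm2 k = ∑' j : ℤ, (stabPhi As Au (k - j)).mulVec
        (ftil (ηm1 (j-1)) (yhat (j-1)) (j-1) - Atil.mulVec (ηm1 (j-1)))) :
    (Summable fun k : ℤ => ‖ηm2 k - ηm1 k‖) ∧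
    (∑' k : ℤ, ‖ηm2 k - ηm1 k‖)
      ≤ (∑' k : ℤ, rowSumNorm (stabPhi As Au k)) * K₁ * (∑' k : ℤ, ‖ηm1 k - ηm k‖) := by
  obtain ⟨c, hcdef⟩ : ∃ c : ℤ → ℝ, c = fun j => ‖ηm1 j - ηm j‖ := ⟨_, rfl⟩
  have hcs : Summable c := by
    rw [hcdef]
    exact Summable.of_nonneg_of_le (fun j => norm_nonneg _) (fun j => norm_sub_le _ _)
      (hηm1sum.add hηmsum)
  have hcnn : ∀ j, 0 ≤ c j := fun j => by rw [hcdef]; exact norm_nonneg _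
  have hηm_le : ∀ j, ‖ηm j‖ ≤ s := fun j =>
    (Summable.le_tsum hηmsum j fun _ _ => norm_nonneg _).trans hηm
  have hηm1_le : ∀ j, ‖ηm1 j‖ ≤ s := fun j =>
    (Summable.le_tsum hηm1sum j fun _ _ => norm_nonneg _).trans hηm1bnd
  obtain ⟨g, hgdef⟩ : ∃ g : ℤ → (Fin ns ⊕ Fin nu → ℝ), g = fun j =>
      (ftil (ηm1 j) (yhat j) j - Atil.mulVec (ηm1 j))
        - (ftil (ηm j) (yhat j) j - Atil.mulVec (ηm j)) := ⟨_, rfl⟩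
  have hg : ∀ j, ‖g j‖ ≤ K₁ * c j := by
    intro j
    have h := hLAL j (ηm1 j) (ηm j) (yhat j) (yhat j) (hηm1_le j) (hηm_le j) (hfbnd j) (hfbnd j)
    rw [hgdef, hcdef]
    simpa [sub_self, norm_zero] using h
  obtain ⟨F, hFdef⟩ : ∃ F : ℤ × ℤ → ℝ,
      F = fun p => rowSumNorm (stabPhi As Au (p.1 - p.2)) * (K₁ * c (p.2 - 1)) := ⟨_, rfl⟩
  have hφ0 : ∀ k, 0 ≤ rowSumNorm (stabPhi As Au k) := fun k => rowSumNorm_nonneg _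
  have hcs1 : Summable fun j : ℤ => c (j - 1) :=
    zShift.summable_iff.mpr hcs
  have hcs' : Summable fun j : ℤ => K₁ * c (j - 1) := hcs1.mul_left _
  have hFnn : ∀ p : ℤ × ℤ, 0 ≤ F p := fun p => by
    rw [hFdef]
    exact mul_nonneg (hφ0 _) (mul_nonneg hK₁.le (hcnn _))
  have hF : Summable F := by
    rw [← shearEquiv.summable_iff]
    have he : (F ∘ shearEquiv) =
        fun p : ℤ × ℤ => rowSumNorm (stabPhi As Au p.1) * (K₁ * c (p.2 - 1)) := by
      funext p
      simp [hFdef, shearEquiv]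
    rw [he]
    exact hφsum.mul_of_nonneg hcs' hφ0 fun j => mul_nonneg hK₁.le (hcnn _)
  have hFk : ∀ k, Summable fun j => F (k, j) :=
    ((summable_prod_of_nonneg hFnn).mp hF).1
  have hG : Summable fun k => ∑' j, F (k, j) :=
    ((summable_prod_of_nonneg hFnn).mp hF).2
  have hbound : ∀ k j : ℤ, ‖(stabPhi As Au (k - j)).mulVec (g (j - 1))‖ ≤ F (k, j) := by
    intro k j
    calc ‖(stabPhi As Au (k - j)).mulVec (g (j - 1))‖
        ≤ rowSumNorm (stabPhi As Au (k - j)) * ‖g (j - 1)‖ := mulVec_norm_le _ _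
      _ ≤ F (k, j) := by
          rw [hFdef]
          exact mul_le_mul_of_nonneg_left (hg _) (hφ0 _)
  have hgsum : ∀ k : ℤ, Summable fun j => ‖(stabPhi As Au (k - j)).mulVec (g (j - 1))‖ :=
    fun k => Summable.of_nonneg_of_le (fun j => norm_nonneg _) (hbound k) (hFk k)
  have hdiff : ∀ k : ℤ, ηm2 k - ηm1 k = ∑' j : ℤ, (stabPhi As Au (k - j)).mulVec (g (j - 1)) := by
    intro k
    rw [hηm2 k, hηm1 k, ← Summable.tsum_sub ((habs2 k).of_norm) ((habs1 k).of_norm)]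
    refine tsum_congr fun j => ?_
    rw [hgdef]
    simp [Matrix.mulVec_sub]
  have hnormk : ∀ k : ℤ, ‖ηm2 k - ηm1 k‖ ≤ ∑' j, F (k, j) := by
    intro k
    rw [hdiff k]
    exact (norm_tsum_le_tsum_norm (hgsum k)).trans (Summable.tsum_le_tsum (hbound k) (hgsum k) (hFk k))
  have hS : Summable fun k => ‖ηm2 k - ηm1 k‖ :=
    Summable.of_nonneg_of_le (fun k => norm_nonneg _) hnormk hG
  refine ⟨hS, ?_⟩
  calc (∑' k, ‖ηm2 k - ηm1 k‖) ≤ ∑' k, ∑' j, F (k, j) := Summable.tsum_le_tsum hnormk hS hG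
    _ = ∑' p : ℤ × ℤ, F p := (Summable.tsum_prod' hF hFk).symm
    _ = ∑' p : ℤ × ℤ, rowSumNorm (stabPhi As Au p.1) * (K₁ * c (p.2 - 1)) := by
        rw [← shearEquiv.tsum_eq F]
        refine tsum_congr fun p => ?_
        rw [hFdef]
        simp [shearEquiv]
    _ = ∑' (b : ℤ) (j : ℤ), rowSumNorm (stabPhi As Au b) * (K₁ * c (j - 1)) :=
          Summable.tsum_prod' (hφsum.mul_of_nonneg hcs' hφ0 fun j => mul_nonneg hK₁.le (hcnn _))
            (fun k => hcs'.mul_left (rowSumNorm (stabPhi As Au k)))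
    _ = ∑' b : ℤ, rowSumNorm (stabPhi As Au b) * ∑' j : ℤ, K₁ * c (j - 1) :=
          tsum_congr fun b => tsum_mul_left
    _ = (∑' b : ℤ, rowSumNorm (stabPhi As Au b)) * ∑' j : ℤ, K₁ * c (j - 1) :=
          tsum_mul_right
    _ = (∑' k : ℤ, rowSumNorm (stabPhi As Au k)) * (K₁ * ∑' j : ℤ, c (j - 1)) := by
          rw [tsum_mul_left]
    _ = (∑' k : ℤ, rowSumNorm (stabPhi As Au k)) * K₁ * (∑' k : ℤ, ‖ηm1 k - ηm k‖) := by
        have htsum : (∑' j : ℤ, c (j - 1)) = ∑' j : ℤ, c j := zShift.tsum_eq c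
        rw [htsum]
        simp only [hcdef]
        ring
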